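/- Let r > 3, f = g + h with g ∈ F_L and h : ℝⁿ → ℝ convex, and suppose f attains its minimum f⋆ at x⋆. Let 0 < s ≤ 1/L and let the generalized Nesterov scheme produce (x_k, y_k) from y₀ = x₀: x_k is the minimizer of z ↦ ‖z − (y_{k−1} − s∇g(y_{k−1}))‖²/(2s) + h(z) and y_k = x_k + ((k−1)/(k+r−1))(x_k − x_{k−1}). Then for every k ≥ 1, f(x_k) − f⋆ ≤ (r−1)²‖x₀ − x⋆‖²/(2s(k+r−2)²), and moreover Σ_{k=1}^∞ (k+r−1)(f(x_k) − f⋆) ≤ (r−1)²‖x₀ − x⋆‖²/(2s(r−3)). -/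

import Mathlib

open Set Filter Topology
open scoped RealInnerProductSpace

noncomputable section

abbrev E (n : ℕ) := EuclideanSpace ℝ (Fin n)

def MemFL (n : ℕ) (L : ℝ) (g : E n → ℝ) : Prop :=
  ConvexOn ℝ Set.univ g ∧ ContDiff ℝ 1 g ∧
    ∀ x y, ‖gradient g x - gradient g y‖ ≤ L * ‖x - y‖

/-- The generalized (proximal) Nesterov scheme with parameter `r` and step size `s` for
`f = g + h`: `y₀ = x₀`, and for `k ≥ 1`, `x_k` minimizes
`z ↦ ‖z - (y_{k-1} - s ∇g(y_{k-1}))‖²/(2s) + h(z)` and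
`y_k = x_k + ((k-1)/(k+r-1)) (x_k - x_{k-1})`. -/
def GenProxNesterov (n : ℕ) (g h : E n → ℝ) (s r : ℝ) (x0 : E n) (x y : ℕ → E n) : Prop :=
  x 0 = x0 ∧ y 0 = x0 ∧
  ∀ k : ℕ,
    IsMinOn (fun z => ‖z - (y k - s • gradient g (y k))‖ ^ 2 / (2 * s) + h z)
      Set.univ (x (k + 1)) ∧
    y (k + 1) = x (k + 1) + ((k : ℝ) / ((k : ℝ) + r)) • (x (k + 1) - x k)

lemma line_hasDerivAt {n : ℕ} {g : E n → ℝ} (hg : ContDiff ℝ 1 g) (y v : E n) (t : ℝ) :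
    HasDerivAt (fun t : ℝ => g (y + t • v)) ⟪gradient g (y + t • v), v⟫ t := by
  have hd : DifferentiableAt ℝ g (y + t • v) :=
    (hg.differentiable one_ne_zero).differentiableAt
  have hgrad := hd.hasGradientAt
  rw [hasGradientAt_iff_hasFDerivAt] at hgrad
  have hline : HasDerivAt (fun t : ℝ => y + t • v) v t := by
    simpa using ((hasDerivAt_id t).smul_const v).const_add y
  have := hgrad.comp_hasDerivAt t hline
  simpa [InnerProductSpace.toDual_apply_apply, Function.comp_def] using this

lemma convex_grad_ineq {n : ℕ} {g : E n → ℝ} (hconv : ConvexOn ℝ Set.univ g)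
    (hg : ContDiff ℝ 1 g) (y z : E n) :
    g y + ⟪gradient g y, z - y⟫ ≤ g z := by
  set φ : ℝ → ℝ := fun t => g (y + t • (z - y)) with hφ
  have hφconv : ConvexOn ℝ Set.univ φ := by
    have := hconv.comp_affineMap (AffineMap.lineMap y z : ℝ →ᵃ[ℝ] E n)
    simp only [Set.preimage_univ] at this
    have heq : φ = g ∘ (AffineMap.lineMap y z : ℝ →ᵃ[ℝ] E n) := by
      funext t
      simp [φ, AffineMap.lineMap_apply, add_comm]
    rw [heq]
    exact this
  have hder : HasDerivAt φ ⟪gradient g y, z - y⟫ 0 := by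
    have := line_hasDerivAt hg y (z - y) 0
    simpa using this
  have hslope := hφconv.le_slope_of_hasDerivAt (Set.mem_univ (0:ℝ)) (Set.mem_univ (1:ℝ))
    one_pos hder
  have : slope φ 0 1 = g z - g y := by
    simp [slope_def_field, φ]
  rw [this] at hslope
  linarith

lemma descent_lemma {n : ℕ} {g : E n → ℝ} {L : ℝ} (hg : ContDiff ℝ 1 g)
    (hLip : ∀ a b, ‖gradient g a - gradient g b‖ ≤ L * ‖a - b‖) (y z : E n) :
    g z ≤ g y + ⟪gradient g y, z - y⟫ + L / 2 * ‖z - y‖ ^ 2 := by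
  set v := z - y with hv
  set ψ : ℝ → ℝ := fun t => g (y + t • v) - t * ⟪gradient g y, v⟫ - L * ‖v‖ ^ 2 * t ^ 2 / 2
    with hψ
  have hder : ∀ t : ℝ, HasDerivAt ψ
      (⟪gradient g (y + t • v), v⟫ - ⟪gradient g y, v⟫ - L * ‖v‖ ^ 2 * t) t := by
    intro t
    have h1 := line_hasDerivAt hg y v t
    have h2 : HasDerivAt (fun t : ℝ => t * ⟪gradient g y, v⟫) ⟪gradient g y, v⟫ t := by
      simpa using (hasDerivAt_id t).mul_const ⟪gradient g y, v⟫
    have h3 : HasDerivAt (fun t : ℝ => L * ‖v‖ ^ 2 * t ^ 2 / 2) (L * ‖v‖ ^ 2 * t) t := by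
      have := ((hasDerivAt_pow 2 t).const_mul (L * ‖v‖ ^ 2)).div_const 2
      exact this.congr_deriv (by ring)
    exact (h1.sub h2).sub h3
  have hanti : AntitoneOn ψ (Icc 0 1) := by
    apply antitoneOn_of_deriv_nonpos (convex_Icc 0 1)
    · exact fun t _ => ((hder t).continuousAt).continuousWithinAt
    · intro t ht
      exact ((hder t).differentiableAt).differentiableWithinAt
    · intro t ht
      rw [interior_Icc] at ht
      rw [(hder t).deriv]
      have hb : ⟪gradient g (y + t • v) - gradient g y, v⟫ ≤ L * t * ‖v‖ ^ 2 := by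
        calc ⟪gradient g (y + t • v) - gradient g y, v⟫
            ≤ ‖gradient g (y + t • v) - gradient g y‖ * ‖v‖ := real_inner_le_norm _ _
          _ ≤ (L * ‖(y + t • v) - y‖) * ‖v‖ := by
              apply mul_le_mul_of_nonneg_right (hLip _ _) (norm_nonneg v)
          _ = L * t * ‖v‖ ^ 2 := by
              rw [show (y + t • v) - y = t • v by abel, norm_smul]
              simp [abs_of_pos ht.1]
              ring
      rw [inner_sub_left] at hb
      linarith
  have h01 : ψ 1 ≤ ψ 0 := hanti (by norm_num) (by norm_num) zero_le_one
  simp only [ψ, one_smul, zero_smul, add_zero] at h01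
  simp only [hv] at h01 ⊢
  have : y + (z - y) = z := by abel
  rw [this] at h01
  linarith

lemma prox_subgrad {n : ℕ} {h : E n → ℝ} {s : ℝ} (hh : ConvexOn ℝ Set.univ h) (hs : 0 < s)
    (u p : E n) (hp : IsMinOn (fun z => ‖z - u‖ ^ 2 / (2 * s) + h z) Set.univ p) (z : E n) :
    h p + ⟪u - p, z - p⟫ / s ≤ h z := by
  set A := ⟪p - u, z - p⟫ with hA
  set B := ‖z - p‖ ^ 2 with hB
  have key : ∀ t : ℝ, 0 < t → t ≤ 1 →
      0 ≤ A / s + t * (B / (2 * s)) + (h z - h p) := by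
    intro t ht0 ht1
    have hmem := hp (Set.mem_univ (p + t • (z - p)))
    simp only [Set.mem_setOf_eq] at hmem
    have hnorm : ‖(p + t • (z - p)) - u‖ ^ 2
        = ‖p - u‖ ^ 2 + 2 * t * A + t ^ 2 * B := by
      have heq : (p + t • (z - p)) - u = (p - u) + t • (z - p) := by abel
      rw [heq, norm_add_sq_real, real_inner_smul_right, norm_smul]
      simp only [Real.norm_eq_abs, abs_of_pos ht0, hA, hB]
      ring
    have hconvpt : h (p + t • (z - p)) ≤ (1 - t) * h p + t * h z := by
      have := hh.2 (Set.mem_univ p) (Set.mem_univ z) (by linarith : (0:ℝ) ≤ 1 - t)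
        (le_of_lt ht0) (by ring : (1 - t) + t = 1)
      have heq : (1 - t) • p + t • z = p + t • (z - p) := by
        rw [smul_sub]; module
      rw [heq] at this
      simpa using this
    have hmain : ‖p - u‖ ^ 2 / (2 * s) + h p
        ≤ (‖p - u‖ ^ 2 + 2 * t * A + t ^ 2 * B) / (2 * s) + ((1 - t) * h p + t * h z) := by
      calc ‖p - u‖ ^ 2 / (2 * s) + h p ≤ ‖(p + t • (z - p)) - u‖ ^ 2 / (2 * s)
            + h (p + t • (z - p)) := hmem
        _ ≤ _ := by rw [hnorm]; linarith
    have hdiv : 0 ≤ (2 * t * A + t ^ 2 * B) / (2 * s) + t * h z - t * h p := by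
      have expand : (‖p - u‖ ^ 2 + 2 * t * A + t ^ 2 * B) / (2 * s)
          = ‖p - u‖ ^ 2 / (2 * s) + (2 * t * A + t ^ 2 * B) / (2 * s) := by ring
      rw [expand] at hmain
      linarith
    have hfac : 0 ≤ t * (A / s + t * (B / (2 * s)) + (h z - h p)) := by
      have heq : t * (A / s + t * (B / (2 * s)) + (h z - h p))
          = (2 * t * A + t ^ 2 * B) / (2 * s) + t * h z - t * h p := by
        field_simp
        ring
      rw [heq]
      exact hdiv
    exact (mul_nonneg_iff_of_pos_left ht0).mp hfac
  -- take t = 1/(m+1) and pass to the limit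
  have hlim : Tendsto (fun m : ℕ => A / s + (1 / ((m : ℝ) + 1)) * (B / (2 * s)) + (h z - h p))
      atTop (𝓝 (A / s + 0 * (B / (2 * s)) + (h z - h p))) := by
    exact (tendsto_const_nhds.add
      (tendsto_one_div_add_atTop_nhds_zero_nat.mul_const (B / (2 * s)))).add tendsto_const_nhds
  have hineq : 0 ≤ A / s + 0 * (B / (2 * s)) + (h z - h p) := by
    refine ge_of_tendsto' hlim fun m => ?_
    exact key (1 / ((m : ℝ) + 1)) (by positivity)
      (by rw [div_le_one (by positivity)]; linarith [Nat.cast_nonneg (α := ℝ) m])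
  have hAeq : ⟪u - p, z - p⟫ = -A := by
    rw [hA, show u - p = -(p - u) by abel, inner_neg_left]
  rw [hAeq]
  have : -A / s = -(A / s) := by ring
  rw [this]
  linarith

lemma scalar_core (s A d' d i1 i2 N P : ℝ) (hA : 0 ≤ A)
    (h1 : s * d' ≤ s * d + i1 - N / 2) (h2 : s * d' ≤ i2 - N / 2) :
    2*s*(A+1)^2*d' + (P - 2*(A+1)*(i2 + A*i1) + (A+1)^2*N) ≤ 2*s*(A+1)*A*d + P := by
  nlinarith [mul_le_mul_of_nonneg_left h1 (by positivity : (0:ℝ) ≤ 2*(A+1)*A),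
    mul_le_mul_of_nonneg_left h2 (by positivity : (0:ℝ) ≤ 2*(A+1))]


lemma key_step {n : ℕ} {g h : E n → ℝ} {L s : ℝ} (hg : MemFL n L g)
    (hh : ConvexOn ℝ Set.univ h) (hL : 0 < L) (hs : 0 < s) (hsL : s ≤ 1 / L)
    (yk p : E n)
    (hp : IsMinOn (fun z => ‖z - (yk - s • gradient g yk)‖ ^ 2 / (2 * s) + h z) Set.univ p)
    (z : E n) :
    g p + h p ≤ g z + h z + ⟪yk - p, yk - z⟫ / s - ‖yk - p‖ ^ 2 / (2 * s) := by
  obtain ⟨hgc, hg1, hglip⟩ := hg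
  have hLs1 : L * s ≤ 1 := by
    calc L * s ≤ L * (1 / L) := mul_le_mul_of_nonneg_left hsL (le_of_lt hL)
      _ = 1 := by field_simp
  have h1 : g p ≤ g yk + ⟪gradient g yk, p - yk⟫ + ‖p - yk‖ ^ 2 / (2 * s) := by
    have := descent_lemma hg1 hglip yk p
    have hb : L / 2 * ‖p - yk‖ ^ 2 ≤ ‖p - yk‖ ^ 2 / (2 * s) := by
      rw [div_mul_eq_mul_div, div_le_div_iff₀ two_pos (by linarith : (0:ℝ) < 2 * s)]
      nlinarith [mul_le_mul_of_nonneg_right hLs1 (sq_nonneg ‖p - yk‖)]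
    linarith
  have h2 : g yk ≤ g z + ⟪gradient g yk, yk - z⟫ := by
    have := convex_grad_ineq hgc hg1 yk z
    have hrw : ⟪gradient g yk, z - yk⟫ = -⟪gradient g yk, yk - z⟫ := by
      rw [show z - yk = -(yk - z) by abel, inner_neg_right]
    linarith [this, hrw.le, hrw.ge]
  have h3 : h p ≤ h z - ⟪(yk - s • gradient g yk) - p, z - p⟫ / s :=
    by linarith [prox_subgrad hh hs (yk - s • gradient g yk) p hp z]
  have hid : ⟪gradient g yk, yk - z⟫ + ⟪gradient g yk, p - yk⟫
      - ⟪(yk - s • gradient g yk) - p, z - p⟫ / s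
      = ⟪yk - p, yk - z⟫ / s - ‖yk - p‖ ^ 2 / s := by
    simp only [← real_inner_self_eq_norm_sq, inner_sub_left, inner_sub_right,
      real_inner_smul_left, real_inner_comm p yk]
    field_simp
    ring
  have hnrm : ‖p - yk‖ = ‖yk - p‖ := by rw [show p - yk = -(yk - p) by abel, norm_neg]
  rw [hnrm] at h1
  have htotal := add_le_add (h1.trans (by linarith : g yk + ⟪gradient g yk, p - yk⟫
      + ‖yk - p‖ ^ 2 / (2 * s) ≤ g z + ⟪gradient g yk, yk - z⟫ + ⟪gradient g yk, p - yk⟫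
      + ‖yk - p‖ ^ 2 / (2 * s))) h3
  have : ‖yk - p‖ ^ 2 / (2 * s) - ‖yk - p‖ ^ 2 / s = -(‖yk - p‖ ^ 2 / (2 * s)) := by ring
  linarith [htotal, hid]

set_option maxHeartbeats 1000000 in
/-- **Theorem 6 (high friction, discrete time).** For `r > 3`, `f = g + h` with `g ∈ F_L`,
`h` convex, and step size `0 < s ≤ 1/L`, the generalized Nesterov scheme satisfies
`f(x_k) - f⋆ ≤ (r-1)²‖x₀-x⋆‖²/(2s(k+r-2)²)` and
`Σ_{k≥1} (k+r-1)(f(x_k) - f⋆) ≤ (r-1)²‖x₀-x⋆‖²/(2s(r-3))`. -/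
theorem gen_scheme_high_friction (n : ℕ) (r : ℝ) (hr : 3 < r) (L : ℝ) (hL : 0 < L)
    (g h : E n → ℝ) (hg : MemFL n L g) (hh : ConvexOn ℝ Set.univ h)
    (xstar : E n) (hmin : IsMinOn (fun x => g x + h x) Set.univ xstar)
    (s : ℝ) (hs : 0 < s) (hsL : s ≤ 1 / L)
    (x0 : E n) (x y : ℕ → E n) (hxy : GenProxNesterov n g h s r x0 x y) :
    (∀ k : ℕ, 1 ≤ k →
      (g (x k) + h (x k)) - (g xstar + h xstar) ≤
        (r - 1) ^ 2 * ‖x0 - xstar‖ ^ 2 / (2 * s * ((k : ℝ) + r - 2) ^ 2)) ∧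
    Summable (fun k : ℕ =>
      ((k : ℝ) + r) * ((g (x (k + 1)) + h (x (k + 1))) - (g xstar + h xstar))) ∧
    ∑' k : ℕ, ((k : ℝ) + r) * ((g (x (k + 1)) + h (x (k + 1))) - (g xstar + h xstar)) ≤
      (r - 1) ^ 2 * ‖x0 - xstar‖ ^ 2 / (2 * s * (r - 3)) := by
  obtain ⟨hx0, hy0, hrec⟩ := hxy
  have hr1 : (0:ℝ) < r - 1 := by linarith
  have hr3 : (0:ℝ) < r - 3 := by linarith
  set δ : ℕ → ℝ := fun k => (g (x k) + h (x k)) - (g xstar + h xstar) with hδdef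
  set a : ℕ → ℝ := fun k => (k : ℝ) / (r - 1) with hadef
  set τ : ℕ → ℝ := fun k => ((k : ℝ) + r - 1) / (r - 1) with hτdef
  set Z : ℕ → E n := fun k => y k + a k • (y k - x k) with hZdef
  have hδnn : ∀ k, 0 ≤ δ k := by
    intro k
    have := hmin (Set.mem_univ (x k))
    simp only [Set.mem_setOf_eq] at this
    simp only [hδdef]
    linarith
  have hann : ∀ k, 0 ≤ a k := fun k => by positivity
  have hτa : ∀ k, τ k = a k + 1 := by
    intro k; simp only [hτdef, hadef]; field_simp; ring
  have hkey : ∀ k (z : E n), g (x (k+1)) + h (x (k+1)) ≤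
      g z + h z + ⟪y k - x (k+1), y k - z⟫ / s - ‖y k - x (k+1)‖ ^ 2 / (2 * s) :=
    fun k z => key_step hg hh hL hs hsL (y k) (x (k+1)) (hrec k).1 z
  -- Z recursion
  have hkr : ∀ k : ℕ, ((k : ℝ) + r) ≠ 0 := by
    intro k; positivity
  have hZrec : ∀ k, Z (k+1) = Z k - τ k • (y k - x (k+1)) := by
    intro k
    simp only [hZdef, hadef, hτdef, (hrec k).2]
    push_cast
    match_scalars <;> field_simp <;> ring
  -- main one-step Lyapunov inequality
  have hstep : ∀ k, 2*s*(τ k)^2 * δ (k+1) + ‖Z (k+1) - xstar‖^2 ≤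
      2*s*(τ k)*(a k) * δ k + ‖Z k - xstar‖^2 := by
    intro k
    set w := y k - x (k+1) with hw
    set I1 := ⟪w, y k - x k⟫ with hI1
    set I2 := ⟪w, y k - xstar⟫ with hI2
    have hinner : ⟪Z k - xstar, w⟫ = I2 + a k * I1 := by
      have hz : Z k - xstar = (y k - xstar) + a k • (y k - x k) := by
        simp only [hZdef]; abel
      rw [hz, inner_add_left, real_inner_smul_left, hI1, hI2,
        real_inner_comm w (y k - xstar), real_inner_comm w (y k - x k)]
    have hnormid : ‖Z (k+1) - xstar‖^2
        = ‖Z k - xstar‖^2 - 2 * τ k * (I2 + a k * I1) + (τ k)^2 * ‖w‖^2 := by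
      rw [hZrec k, show Z k - τ k • w - xstar = (Z k - xstar) - τ k • w by abel,
        norm_sub_sq_real, real_inner_smul_right, hinner, norm_smul]
      simp only [Real.norm_eq_abs]
      rw [mul_pow, sq_abs]
      ring
    have hmul : ∀ {X Y I : ℝ}, X ≤ Y + I / s - ‖w‖^2 / (2*s) →
        s * X ≤ s * Y + I - ‖w‖^2 / 2 := by
      intro X Y I hXY
      have h2 := mul_le_mul_of_nonneg_left hXY hs.le
      calc s * X ≤ s * (Y + I / s - ‖w‖^2 / (2*s)) := h2
        _ = s * Y + I - ‖w‖^2 / 2 := by field_simp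
    have hA : s * δ (k+1) ≤ s * δ k + I1 - ‖w‖^2 / 2 := by
      have := hmul (X := δ (k+1)) (Y := δ k) (I := I1) ?_
      · exact this
      · have := hkey k (x k); simp only [hδdef]; linarith
    have hB : s * δ (k+1) ≤ I2 - ‖w‖^2 / 2 := by
      have h0 := hkey k xstar
      have : δ (k+1) ≤ 0 + I2 / s - ‖w‖^2 / (2*s) := by
        simp only [hδdef]; linarith
      have := hmul this
      linarith
    set A := a k with hAk
    have hτv : τ k = A + 1 := hτa k
    rw [hnormid, hτv]
    exact scalar_core s A (δ (k+1)) (δ k) I1 I2 (‖w‖^2) (‖Z k - xstar‖^2) (hann k) hA hB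
  -- drop form
  have hstep' : ∀ k : ℕ, (2*s*(τ (k+1))^2 * δ (k+1+1) + ‖Z (k+1+1) - xstar‖^2)
      + (2*s*(r-3)/(r-1)^2) * (((k:ℝ)+r) * δ (k+1))
      ≤ 2*s*(τ k)^2 * δ (k+1) + ‖Z (k+1) - xstar‖^2 := by
    intro k
    have h1 := hstep (k+1)
    have hco : 2*s*(τ (k+1))*(a (k+1)) + 2*s*(r-3)/(r-1)^2*((k:ℝ)+r) + 2*s/(r-1)^2
        = 2*s*(τ k)^2 := by
      simp only [hτdef, hadef]
      push_cast
      field_simp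
      ring
    have hcoδ : (2*s*(τ (k+1))*(a (k+1)) + 2*s*(r-3)/(r-1)^2*((k:ℝ)+r)) * δ (k+1)
        ≤ 2*s*(τ k)^2 * δ (k+1) := by
      rw [← hco]
      have h2 : 0 ≤ 2*s/(r-1)^2 * δ (k+1) :=
        mul_nonneg (by positivity) (hδnn (k+1))
      nlinarith [h2]
    have hPa : (0:ℝ) ≤ 0 := le_refl 0
    set P1 := ‖Z (k+1+1) - xstar‖ ^ 2 with hP1
    set P2 := ‖Z (k+1) - xstar‖ ^ 2 with hP2
    set D1 := δ (k+1) with hD1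
    set D2 := δ (k+1+1) with hD2
    set T1 := τ (k+1) with hT1
    set T0 := τ k with hT0
    set A1 := a (k+1) with hA1
    clear_value P1 P2 D1 D2 T1 T0 A1
    linarith only [h1, hcoδ]
  -- initial bound
  have hΨ0 : 2*s*(τ 0)^2 * δ 1 + ‖Z 1 - xstar‖^2 ≤ ‖x0 - xstar‖^2 := by
    have h0 := hstep 0
    have ha0 : a 0 = 0 := by simp [hadef]
    have hZ0 : Z 0 = x0 := by simp [hZdef, ha0, hy0]
    rw [ha0, hZ0] at h0
    simpa using h0
  -- induction
  have hmain : ∀ m : ℕ, (2*s*(τ m)^2 * δ (m+1) + ‖Z (m+1) - xstar‖^2)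
      + ∑ k ∈ Finset.range m, (2*s*(r-3)/(r-1)^2) * (((k:ℝ)+r) * δ (k+1))
      ≤ ‖x0 - xstar‖^2 := by
    intro m
    induction m with
    | zero => simpa using hΨ0
    | succ m ih =>
      rw [Finset.sum_range_succ]
      have := hstep' m
      linarith
  have hB : (0:ℝ) ≤ ‖x0 - xstar‖^2 := sq_nonneg _
  have hsumnn : ∀ m : ℕ, 0 ≤ ∑ k ∈ Finset.range m,
      (2*s*(r-3)/(r-1)^2) * (((k:ℝ)+r) * δ (k+1)) := by
    intro m
    apply Finset.sum_nonneg
    intro k _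
    have : (0:ℝ) ≤ (k:ℝ) + r := by positivity
    exact mul_nonneg (by positivity) (mul_nonneg this (hδnn (k+1)))
  refine ⟨?_, ?_, ?_⟩
  · -- pointwise bound
    intro k hk
    obtain ⟨m, rfl⟩ : ∃ m, k = m + 1 := ⟨k - 1, (Nat.succ_pred_eq_of_pos hk).symm⟩
    have h1 := hmain m
    have h2 : 2*s*(τ m)^2 * δ (m+1) ≤ ‖x0 - xstar‖^2 := by
      have h3 : (0:ℝ) ≤ ‖Z (m+1) - xstar‖ ^ 2 := sq_nonneg _
      have h4 := hsumnn m
      set P := ‖Z (m + 1) - xstar‖ ^ 2 with hP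
      set S := ∑ k ∈ Finset.range m, 2 * s * (r - 3) / (r - 1) ^ 2 * ((↑k + r) * δ (k + 1)) with hS
      set D := δ (m + 1) with hD
      set T := τ m with hT
      set B2 := ‖x0 - xstar‖ ^ 2 with hB2
      clear_value P S D T B2
      linarith only [h1, h3, h4]
    have hden : (0:ℝ) < ((m+1 : ℕ) : ℝ) + r - 2 := by
      push_cast; linarith [Nat.cast_nonneg (α := ℝ) m]
    show δ (m+1) ≤ (r - 1) ^ 2 * ‖x0 - xstar‖ ^ 2 / (2 * s * (((m+1:ℕ) : ℝ) + r - 2) ^ 2)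
    rw [le_div_iff₀ (by positivity)]
    have hq : 2*s*(τ m)^2 * δ (m+1) * (r-1)^2
        = δ (m+1) * (2 * s * (((m+1:ℕ):ℝ) + r - 2) ^ 2) := by
      simp only [hτdef]
      push_cast
      field_simp
      ring
    nlinarith [mul_le_mul_of_nonneg_right h2 (sq_nonneg (r-1))]
  · -- summable
    apply summable_of_sum_range_le
      (c := (r - 1) ^ 2 * ‖x0 - xstar‖ ^ 2 / (2 * s * (r - 3)))
    · intro k
      have : (0:ℝ) ≤ (k:ℝ) + r := by positivity
      exact mul_nonneg this (hδnn (k+1))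
    · intro m
      have h1 := hmain m
      have hKS : (2*s*(r-3)/(r-1)^2) * ∑ k ∈ Finset.range m, (((k:ℝ)+r) * δ (k+1))
          ≤ ‖x0 - xstar‖^2 := by
        rw [Finset.mul_sum]
        have hΨnn : 0 ≤ 2*s*(τ m)^2 * δ (m+1) + ‖Z (m+1) - xstar‖^2 := by
          have h4 : (0:ℝ) ≤ 2*s*(τ m)^2 * δ (m+1) :=
            mul_nonneg (by positivity) (hδnn (m+1))
          have h3 : (0:ℝ) ≤ ‖Z (m+1) - xstar‖ ^ 2 := sq_nonneg _
          linarith [h3, h4]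
        set P := ‖Z (m + 1) - xstar‖ ^ 2 with hP
        set S := ∑ k ∈ Finset.range m, 2 * s * (r - 3) / (r - 1) ^ 2 * ((↑k + r) * δ (k + 1)) with hS
        set D := δ (m + 1) with hD
        set T := τ m with hT
        set B2 := ‖x0 - xstar‖ ^ 2 with hB2
        clear_value P S D T B2
        linarith only [h1, hΨnn]
      rw [le_div_iff₀ (by positivity)]
      have heq : (2*s*(r-3)/(r-1)^2) * (∑ k ∈ Finset.range m, (((k:ℝ)+r) * δ (k+1)))
          * (r-1)^2 = (∑ k ∈ Finset.range m, (((k:ℝ)+r) * δ (k+1))) * (2*s*(r-3)) := by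
        field_simp
      nlinarith [mul_le_mul_of_nonneg_right hKS (sq_nonneg (r-1))]
  · -- tsum bound
    apply Real.tsum_le_of_sum_range_le
    · intro k
      have : (0:ℝ) ≤ (k:ℝ) + r := by positivity
      exact mul_nonneg this (hδnn (k+1))
    · intro m
      have h1 := hmain m
      have hKS : (2*s*(r-3)/(r-1)^2) * ∑ k ∈ Finset.range m, (((k:ℝ)+r) * δ (k+1))
          ≤ ‖x0 - xstar‖^2 := by
        rw [Finset.mul_sum]
        have hΨnn : 0 ≤ 2*s*(τ m)^2 * δ (m+1) + ‖Z (m+1) - xstar‖^2 := by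
          have h4 : (0:ℝ) ≤ 2*s*(τ m)^2 * δ (m+1) :=
            mul_nonneg (by positivity) (hδnn (m+1))
          have h3 : (0:ℝ) ≤ ‖Z (m+1) - xstar‖ ^ 2 := sq_nonneg _
          linarith [h3, h4]
        set P := ‖Z (m + 1) - xstar‖ ^ 2 with hP
        set S := ∑ k ∈ Finset.range m, 2 * s * (r - 3) / (r - 1) ^ 2 * ((↑k + r) * δ (k + 1)) with hS
        set D := δ (m + 1) with hD
        set T := τ m with hT
        set B2 := ‖x0 - xstar‖ ^ 2 with hB2
        clear_value P S D T B2
        linarith only [h1, hΨnn]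
      rw [le_div_iff₀ (by positivity)]
      have heq : (2*s*(r-3)/(r-1)^2) * (∑ k ∈ Finset.range m, (((k:ℝ)+r) * δ (k+1)))
          * (r-1)^2 = (∑ k ∈ Finset.range m, (((k:ℝ)+r) * δ (k+1))) * (2*s*(r-3)) := by
        field_simp
      nlinarith [mul_le_mul_of_nonneg_right hKS (sq_nonneg (r-1))]
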